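/- (Laplace principle) For a continuous function F : ℝ^d → ℝ that is bounded below and an absolutely continuous probability density g with compact support, lim_{T→0⁺} −T log(∫ g(x) e^{−F(x)/T} dx) = inf_{x ∈ supp(g)} F(x). -/

import Mathlib

open MeasureTheory Filter

theorem laplace_principle (d : ℕ) (F : (Fin d → ℝ) → ℝ)
    (hF_cont : Continuous F) (hF_bdd : BddBelow (Set.range F))
    (g : (Fin d → ℝ) → ℝ) (hg_cont : Continuous g) (hg_nonneg : ∀ x, 0 ≤ g x)
    (hg_supp : HasCompactSupport g) (hg_one : ∫ x, g x = 1) :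
    Tendsto (fun T : ℝ => -T * Real.log (∫ x, g x * Real.exp (-F x / T)))
      (nhdsWithin 0 (Set.Ioi 0)) (nhds (sInf (F '' tsupport g))) := by
  set K := tsupport g with hK
  have hKcomp : IsCompact K := hg_supp
  have hx0 : ∃ x, g x ≠ 0 := by
    by_contra h
    push_neg at h
    simp [h] at hg_one
  obtain ⟨x₀, hx₀⟩ := hx0
  have hx₀K : x₀ ∈ K := subset_tsupport g hx₀
  have hFKc : IsCompact (F '' K) := hKcomp.image hF_cont
  have hFKne : (F '' K).Nonempty := ⟨F x₀, x₀, hx₀K, rfl⟩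
  have hbdd : BddBelow (F '' K) := hFKc.bddBelow
  set m := sInf (F '' K) with hm
  have hm_le : ∀ x ∈ K, m ≤ F x := fun x hx => csInf_le hbdd ⟨x, hx, rfl⟩
  obtain ⟨xs, hxsK, hxsmin⟩ := hKcomp.exists_isMinOn ⟨x₀, hx₀K⟩ hF_cont.continuousOn
  have hmxs : F xs = m :=
    le_antisymm (le_csInf hFKne (by rintro a ⟨x, hx, rfl⟩; exact hxsmin hx)) (hm_le xs hxsK)
  have hgint : Integrable g := hg_cont.integrable_of_hasCompactSupport hg_supp
  have hIint : ∀ T : ℝ, Integrable (fun x => g x * Real.exp (-F x / T)) := by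
    intro T
    exact (hg_cont.mul (Real.continuous_exp.comp
      (hF_cont.neg.div_const T))).integrable_of_hasCompactSupport hg_supp.mul_right
  have hIpos : ∀ T : ℝ, 0 < ∫ x, g x * Real.exp (-F x / T) := by
    intro T
    rw [integral_pos_iff_support_of_nonneg
      (fun x => mul_nonneg (hg_nonneg x) (Real.exp_pos _).le) (hIint T)]
    have hsub : Function.support g ⊆ Function.support fun x => g x * Real.exp (-F x / T) := by
      intro x hx
      simp only [Function.mem_support] at *
      exact mul_ne_zero hx (Real.exp_pos _).ne'
    exact lt_of_lt_of_le ((hg_cont.isOpen_support).measure_pos volume ⟨x₀, hx₀⟩)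
      (measure_mono hsub)
  -- lower bound: m ≤ -T * log I for T > 0
  have hlower : ∀ T : ℝ, 0 < T →
      m ≤ -T * Real.log (∫ x, g x * Real.exp (-F x / T)) := by
    intro T hT
    have hIle : (∫ x, g x * Real.exp (-F x / T)) ≤ Real.exp (-m / T) := by
      have hpt : ∀ x, g x * Real.exp (-F x / T) ≤ g x * Real.exp (-m / T) := by
        intro x
        rcases eq_or_ne (g x) 0 with h | h
        · simp [h]
        · have hxK : x ∈ K := subset_tsupport g h
          have : -F x / T ≤ -m / T :=
            (div_le_div_iff_of_pos_right hT).2 (by linarith [hm_le x hxK])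
          exact mul_le_mul_of_nonneg_left (Real.exp_le_exp.2 this) (hg_nonneg x)
      calc (∫ x, g x * Real.exp (-F x / T))
          ≤ ∫ x, g x * Real.exp (-m / T) :=
            integral_mono (hIint T) (hgint.mul_const _) hpt
        _ = Real.exp (-m / T) := by rw [integral_mul_const, hg_one, one_mul]
    have hlog : Real.log (∫ x, g x * Real.exp (-F x / T)) ≤ -m / T := by
      calc Real.log (∫ x, g x * Real.exp (-F x / T))
          ≤ Real.log (Real.exp (-m / T)) := Real.log_le_log (hIpos T) hIle
        _ = -m / T := Real.log_exp _
    have h1 : T * Real.log (∫ x, g x * Real.exp (-F x / T)) ≤ T * (-m / T) :=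
      mul_le_mul_of_nonneg_left hlog hT.le
    have h2 : T * (-m / T) = -m := by
      rw [mul_comm]; exact div_mul_cancel₀ _ hT.ne'
    linarith
  rw [tendsto_order]
  constructor
  · intro a ha
    filter_upwards [self_mem_nhdsWithin] with T hT
    exact lt_of_lt_of_le ha (hlower T hT)
  · intro b hb
    set ε : ℝ := (b - m) / 2 with hε
    have hεpos : 0 < ε := by simp [hε]; linarith
    set U : Set (Fin d → ℝ) := F ⁻¹' Set.Iio (m + ε) with hU
    have hUopen : IsOpen U := isOpen_Iio.preimage hF_cont
    have hxsU : xs ∈ U := by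
      simp only [hU, Set.mem_preimage, Set.mem_Iio, hmxs]
      linarith
    have hclos : xs ∈ closure (Function.support g) := hxsK
    obtain ⟨y, hyU, hyg⟩ := mem_closure_iff.1 hclos U hUopen hxsU
    set c : ℝ := ∫ x, U.indicator g x with hc
    have hindint : Integrable (U.indicator g) := hgint.indicator hUopen.measurableSet
    have hcpos : 0 < c := by
      rw [hc, integral_pos_iff_support_of_nonneg
        (fun x => Set.indicator_nonneg (fun x _ => hg_nonneg x) x) hindint]
      rw [Set.support_indicator]
      exact (hUopen.inter hg_cont.isOpen_support).measure_pos volume ⟨y, hyU, hyg⟩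
    -- upper bound: -T log I ≤ m + ε - T * log c for T > 0
    have hupper : ∀ T : ℝ, 0 < T →
        -T * Real.log (∫ x, g x * Real.exp (-F x / T))
          ≤ m + ε - T * Real.log c := by
      intro T hT
      have hIge : c * Real.exp (-(m + ε) / T) ≤ ∫ x, g x * Real.exp (-F x / T) := by
        have hpt : ∀ x, U.indicator g x * Real.exp (-(m + ε) / T)
            ≤ g x * Real.exp (-F x / T) := by
          intro x
          by_cases hx : x ∈ U
          · rw [Set.indicator_of_mem hx]
            have hFx : F x < m + ε := hx
            have : -(m + ε) / T ≤ -F x / T :=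
              (div_le_div_iff_of_pos_right hT).2 (by linarith)
            exact mul_le_mul_of_nonneg_left (Real.exp_le_exp.2 this) (hg_nonneg x)
          · rw [Set.indicator_of_notMem hx, zero_mul]
            exact mul_nonneg (hg_nonneg x) (Real.exp_pos _).le
        calc c * Real.exp (-(m + ε) / T)
            = ∫ x, U.indicator g x * Real.exp (-(m + ε) / T) := by
              rw [integral_mul_const]
          _ ≤ ∫ x, g x * Real.exp (-F x / T) :=
              integral_mono (hindint.mul_const _) (hIint T) hpt
      have hlog : Real.log c + (-(m + ε) / T)
          ≤ Real.log (∫ x, g x * Real.exp (-F x / T)) := by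
        have h1 : Real.log (c * Real.exp (-(m + ε) / T))
            ≤ Real.log (∫ x, g x * Real.exp (-F x / T)) :=
          Real.log_le_log (mul_pos hcpos (Real.exp_pos _)) hIge
        rwa [Real.log_mul hcpos.ne' (Real.exp_pos _).ne', Real.log_exp] at h1
      have h1 : T * (Real.log c + (-(m + ε) / T))
          ≤ T * Real.log (∫ x, g x * Real.exp (-F x / T)) :=
        mul_le_mul_of_nonneg_left hlog hT.le
      have h2 : T * (Real.log c + (-(m + ε) / T)) = T * Real.log c - (m + ε) := by
        field_simp
        ring
      linarith
    have htend : Tendsto (fun T : ℝ => T * Real.log c) (nhdsWithin 0 (Set.Ioi 0)) (nhds 0) := by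
      have h := (continuous_id.mul (continuous_const : Continuous fun _ : ℝ => Real.log c)).tendsto (0 : ℝ)
      simpa [Pi.mul_def] using h.mono_left nhdsWithin_le_nhds
    have hev : ∀ᶠ T in nhdsWithin 0 (Set.Ioi 0), -ε < T * Real.log c :=
      htend.eventually (eventually_gt_nhds (by linarith))
    filter_upwards [self_mem_nhdsWithin, hev] with T hT hTc
    have := hupper T hT
    have hbε : m + ε + ε = b := by rw [hε]; ring
    linarith
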